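/- Let C be a category with finite coproducts and let J be a Grothendieck topology on C generated by a pretopology τ. Assume: (i) coproducts in C are disjoint, i.e., the coprojections U_i → ∐_j U_j are monomorphisms and for i ≠ j the pullback U_i ×_{∐ U_k} U_j is an initial object of C; (ii) the empty family is a τ-covering family of the initial object; and (iii) for every finite family {U_i}_{i∈I} of objects of C, the family of coprojections {U_i → ∐_{j∈I} U_j}_{i∈I} is a τ-covering family. Then for every finite family {U_i}_{i∈I} of objects of C, the canonical morphism ∐_{i∈I} a(yU_i) → a(y(∐_{i∈I} U_i)) in the category Sh(C, J) of sheaves of types is an isomorphism, where a denotes sheafification and y the Yoneda embedding. -/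

import Mathlib

/-!
STATEMENT 2: In a category `C` with finite coproducts whose topology is generated
by a pretopology `K`, if coproducts are disjoint (coprojections are monomorphisms
with initial pairwise intersections), the empty family covers the initial object,
and the coprojection families of finite coproducts are covering families, then
for every finite family `{U i}` the canonical morphism
`∐ a(y(U i)) ⟶ a(y(∐ U))` is an isomorphism of sheaves of types.
-/

open CategoryTheory CategoryTheory.Limits Opposite

universe u

instance sheafTypeHasColimits_aux {C : Type u} [SmallCategory C] (J : GrothendieckTopology C) :
    HasColimitsOfSize.{u, u} (Sheaf J (Type u)) :=
  Sheaf.instHasColimitsOfSize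

theorem sheafification_preserves_finite_coproducts_of_disjoint
    {C : Type u} [SmallCategory C] [HasPullbacks C] [HasFiniteCoproducts C]
    (K : Pretopology C)
    (hmono : ∀ (σ : Type u) [Finite σ] (W : σ → C) (i : σ), Mono (Sigma.ι W i))
    (hdisj : ∀ (σ : Type u) [Finite σ] (W : σ → C) (i j : σ), i ≠ j →
      Nonempty (IsInitial (pullback (Sigma.ι W i) (Sigma.ι W j))))
    (hempty : Presieve.ofArrows (fun e : PEmpty.{u + 1} => e.elim)
      (fun e => e.elim) ∈ K (⊥_ C))
    (hcoproj : ∀ (σ : Type u) [Finite σ] (W : σ → C),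
      Presieve.ofArrows W (fun i => Sigma.ι W i) ∈ K (∐ W))
    (ι : Type u) [Finite ι] (U : ι → C) :
    IsIso (Limits.Sigma.desc (fun i =>
      (presheafToSheaf (K.toGrothendieck) (Type u)).map (yoneda.map (Sigma.ι U i)))) := by
  -- every sheaf is a sheaf (of types) for every covering presieve of `K`
  have hsheaf : ∀ (F : Sheaf (K.toGrothendieck) (Type u)) {X : C} {R : Presieve X},
      R ∈ K X → Presieve.IsSheafFor F.val R := by
    intro F X R hR
    have := F.cond
    rw [isSheaf_iff_isSheaf_of_type, Presieve.isSheaf_pretopology] at this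
    exact this R hR
  -- objects mapping to the initial object have subsingleton sections in any sheaf
  have hsub : ∀ (F : Sheaf (K.toGrothendieck) (Type u)) (Z : C) (_ : Z ⟶ ⊥_ C),
      Subsingleton (F.val.obj (op Z)) := by
    intro F Z φ
    have hcov : Presieve.pullbackArrows φ
        (Presieve.ofArrows (fun e : PEmpty.{u + 1} => e.elim) (fun e => e.elim)) ∈ K Z :=
      K.pullbacks φ _ hempty
    have hKempty :
        (Presieve.pullbackArrows φ (Presieve.ofArrows (fun e : PEmpty.{u + 1} => e.elim)
          (fun e => e.elim)) :
          Presieve Z) = (⊥ : Presieve Z) := by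
      funext Y
      ext f
      constructor
      · rintro ⟨W, g, ⟨e⟩⟩
        exact e.elim
      · intro hf
        exact hf.elim
    rw [hKempty] at hcov
    have hSF := hsheaf F hcov
    constructor
    intro t₁ t₂
    let x : Presieve.FamilyOfElements F.val (⊥ : Presieve Z) := fun Y f hf => hf.elim
    have hx : x.Compatible := fun _ _ _ _ _ _ _ h₁ _ _ => h₁.elim
    obtain ⟨t, _, ht⟩ := hSF x hx
    have h₁ : t₁ = t := ht t₁ (fun Y f hf => hf.elim)
    have h₂ : t₂ = t := ht t₂ (fun Y f hf => hf.elim)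
    rw [h₁, h₂]
  -- every family of elements over the coprojections is compatible
  have hcompat : ∀ (F : Sheaf (K.toGrothendieck) (Type u))
      (x : (i : ι) → F.val.obj (op (U i))),
      Presieve.Arrows.Compatible F.val (fun i => Sigma.ι U i) x := by
    intro F x i j Z gi gj hg
    by_cases hij : i = j
    · subst hij
      have : Mono (Sigma.ι U i) := hmono ι U i
      have : gi = gj := by
        rwa [cancel_mono (Sigma.ι U i)] at hg
      rw [this]
    · obtain ⟨hinit⟩ := hdisj ι U i j hij
      have φ : Z ⟶ ⊥_ C := pullback.lift gi gj hg ≫ hinit.to (⊥_ C)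
      have := hsub F Z φ
      exact Subsingleton.elim _ _
  -- the sheaf condition: unique amalgamation
  have hamalg : ∀ (F : Sheaf (K.toGrothendieck) (Type u))
      (x : (i : ι) → F.val.obj (op (U i))),
      ∃! t : F.val.obj (op (∐ U)), ∀ i, F.val.map (Sigma.ι U i).op t = x i := by
    intro F x
    exact (Presieve.isSheafFor_arrows_iff F.val (fun i => Sigma.ι U i)).mp
      (hsheaf F (hcoproj ι U)) x (hcompat F x)
  -- the equivalence `Hom(a (y X), F) ≃ F.val (X)`
  let e : ∀ (X : C) (F : Sheaf (K.toGrothendieck) (Type u)),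
      ((presheafToSheaf (K.toGrothendieck) (Type u)).obj (yoneda.obj X) ⟶ F)
        ≃ F.val.obj (op X) :=
    fun X F =>
      ((sheafificationAdjunction (K.toGrothendieck) (Type u)).homEquiv _ _).trans yonedaEquiv
  have he : ∀ (X X' : C) (g : X ⟶ X') (F : Sheaf (K.toGrothendieck) (Type u))
      (f : (presheafToSheaf (K.toGrothendieck) (Type u)).obj (yoneda.obj X') ⟶ F),
      e X F ((presheafToSheaf (K.toGrothendieck) (Type u)).map (yoneda.map g) ≫ f)
        = F.val.map g.op (e X' F f) := by
    intro X X' g F f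
    dsimp only [e, Equiv.trans_apply]
    rw [Adjunction.homEquiv_naturality_left]
    exact (yonedaEquiv_naturality _ _).symm
  -- the cofan with point `a (y (∐ U))` is a colimit
  have hc : IsColimit (Cofan.mk
      ((presheafToSheaf (K.toGrothendieck) (Type u)).obj (yoneda.obj (∐ U)))
      (fun i => (presheafToSheaf (K.toGrothendieck) (Type u)).map
        (yoneda.map (Sigma.ι U i)))) := by
    refine mkCofanColimit _
      (fun t => (e _ t.pt).symm (hamalg t.pt (fun i => e _ t.pt (t.inj i))).choose) ?_ ?_
    · intro t i
      apply (e _ t.pt).injective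
      rw [cofan_mk_inj, he, Equiv.apply_symm_apply]
      exact (hamalg t.pt (fun i => e _ t.pt (t.inj i))).choose_spec.1 i
    · intro t m hm
      apply (e _ t.pt).injective
      rw [Equiv.apply_symm_apply]
      refine (hamalg t.pt (fun i => e _ t.pt (t.inj i))).choose_spec.2 _ (fun i => ?_)
      rw [← he]
      congr 1
      exact hm i
  have heq : Sigma.desc (fun i =>
      (presheafToSheaf (K.toGrothendieck) (Type u)).map (yoneda.map (Sigma.ι U i))) =
      ((colimit.isColimit (Discrete.functor (fun i =>
        (presheafToSheaf (K.toGrothendieck) (Type u)).obj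
          (yoneda.obj (U i))))).coconePointUniqueUpToIso hc).hom := by
    apply colimit.hom_ext
    intro j
    simp [IsColimit.coconePointUniqueUpToIso]
  rw [heq]
  infer_instance
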